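/- arXiv:1903.08620 — 4 statements merged into one kernel-verified Lean document; each statement's English description precedes it below -/
import Mathlib

section
/- Let $\upsilon \in \ell^1(\mathbb{Z})$ be a complex sequence and let $\lambda \in \mathbb{C} \setminus [-2,2]$, with $\lambda = k + k^{-1}$ for $0 < |k| < 1$. Define the Birman–Schwinger operator $K(\lambda)$ on $\ell^2(\mathbb{Z})$ by its matrix entries $K(\lambda)_{m,n} = \sqrt{|\upsilon_m|} \, \frac{k^{|m-n|}}{k - k^{-1}} \, \sqrt{|\upsilon_n|}\,\mathrm{sgn}(\upsilon_n)$. Then $K(\lambda)$ is bounded with operator norm $\|K(\lambda)\| \le \|\upsilon\|_{\ell^1(\mathbb{Z})} / \sqrt{|\lambda^2 - 4|}$. -/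
open scoped ENNReal ComplexConjugate

noncomputable section

/-- `ℓ²(ℤ)`. -/
abbrev l2Z := lp (fun _ : ℤ => ℂ) 2

/-- The complex signum function: `sgn z = z/|z|` for `z ≠ 0` and `sgn 0 = 0`. -/
def csgn (z : ℂ) : ℂ := if z = 0 then 0 else z / ‖z‖

lemma norm_csgn_le_one (z : ℂ) : ‖csgn z‖ ≤ 1 := by
  unfold csgn
  split_ifs with h
  · simp
  · have hz : ‖z‖ ≠ 0 := by simpa using h
    rw [norm_div, Complex.norm_real, norm_norm, div_self hz]

def shearEquiv1 : ℤ × ℤ ≃ ℤ × ℤ :=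
  ⟨fun p => (p.1, p.1 - p.2), fun p => (p.1, p.1 - p.2), fun p => by simp, fun p => by simp⟩

def shearEquiv2 : ℤ × ℤ ≃ ℤ × ℤ :=
  ⟨fun p => (p.2, p.1 - p.2), fun q => (q.1 + q.2, q.1), fun p => by simp, fun q => by simp⟩

lemma tsum_cs (x y : ℤ → ℝ) (hx : ∀ i, 0 ≤ x i) (hy : ∀ i, 0 ≤ y i)
    (hx2 : Summable fun i => x i ^ 2) (hy2 : Summable fun i => y i ^ 2) :
    ∑' i, x i * y i ≤ Real.sqrt (∑' i, x i ^ 2) * Real.sqrt (∑' i, y i ^ 2) := by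
  have hxy : Summable fun i => x i * y i := by
    refine Summable.of_nonneg_of_le (fun i => mul_nonneg (hx i) (hy i)) (fun i => ?_)
      ((hx2.add hy2).div_const 2)
    nlinarith [sq_nonneg (x i - y i)]
  refine Summable.tsum_le_of_sum_le hxy fun s => ?_
  have h1 : (∑ i ∈ s, x i * y i) ^ 2 ≤ (∑ i ∈ s, x i ^ 2) * ∑ i ∈ s, y i ^ 2 :=
    Finset.sum_mul_sq_le_sq_mul_sq s x y
  calc ∑ i ∈ s, x i * y i
      = Real.sqrt ((∑ i ∈ s, x i * y i) ^ 2) :=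
        (Real.sqrt_sq (Finset.sum_nonneg fun i _ => mul_nonneg (hx i) (hy i))).symm
    _ ≤ Real.sqrt ((∑ i ∈ s, x i ^ 2) * ∑ i ∈ s, y i ^ 2) := Real.sqrt_le_sqrt h1
    _ ≤ Real.sqrt ((∑' i, x i ^ 2) * ∑' i, y i ^ 2) := by
        refine Real.sqrt_le_sqrt (mul_le_mul ?_ ?_ ?_ ?_)
        · exact Summable.sum_le_tsum s (fun i _ => sq_nonneg _) hx2
        · exact Summable.sum_le_tsum s (fun i _ => sq_nonneg _) hy2
        · exact Finset.sum_nonneg fun i _ => sq_nonneg _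
        · exact tsum_nonneg fun i => sq_nonneg _
    _ = Real.sqrt (∑' i, x i ^ 2) * Real.sqrt (∑' i, y i ^ 2) :=
        Real.sqrt_mul (tsum_nonneg fun i => sq_nonneg _) _

lemma summable_sq_coe (f : l2Z) : Summable fun m : ℤ => ‖f m‖ ^ 2 := by
  have h := (lp.memℓp f).summable (p := 2) (by norm_num)
  refine h.congr fun m => ?_
  rw [show ((2:ℝ≥0∞)).toReal = (2:ℝ) by norm_num, Real.rpow_two]

lemma sqrt_tsum_sq (f : l2Z) : Real.sqrt (∑' m : ℤ, ‖f m‖ ^ 2) = ‖f‖ := by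
  have h := lp.norm_rpow_eq_tsum (p := 2) (by norm_num) f
  have h2 : ‖f‖ ^ (2:ℕ) = ∑' m : ℤ, ‖f m‖ ^ (2:ℕ) := by
    rw [show ((2:ℝ≥0∞)).toReal = (2:ℝ) by norm_num] at h
    simpa [Real.rpow_two] using h
  rw [← h2, Real.sqrt_sq (norm_nonneg f)]

set_option maxHeartbeats 1000000 in
/-- for `v ∈ ℓ¹(ℤ)` and `λ = k + k⁻¹` with `0 < |k| < 1`, the
Birman–Schwinger operator with matrix entries
`K(λ)_{m,n} = √|v_m| · k^{|m-n|}/(k - k⁻¹) · √|v_n| sgn(v_n)` is a bounded operator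
on `ℓ²(ℤ)` with `‖K(λ)‖ ≤ ‖v‖_{ℓ¹} / √|λ² - 4|`. -/
theorem stmt5 (v : ℤ → ℂ) (hv : Summable fun n => ‖v n‖)
    (k : ℂ) (h0 : 0 < ‖k‖) (h1 : ‖k‖ < 1)
    (lam : ℂ) (hlam : lam = k + k⁻¹) :
    ∃ K : l2Z →L[ℂ] l2Z,
      (∀ m n : ℤ,
        (inner ℂ (lp.single 2 m 1 : l2Z) (K (lp.single 2 n 1)) : ℂ) =
          (Real.sqrt (‖v m‖) : ℂ) * (k ^ (m - n).natAbs / (k - k⁻¹))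
            * ((Real.sqrt (‖v n‖) : ℂ) * csgn (v n))) ∧
      ‖K‖ ≤ (∑' n : ℤ, ‖v n‖) / Real.sqrt (‖lam ^ 2 - 4‖) := by
  classical
  -- basic quantities
  set r : ℝ := ‖k‖ with hrdef
  have hk0 : k ≠ 0 := norm_pos_iff.mp h0
  have hkk : k - k⁻¹ ≠ 0 := by
    intro h
    have hk2 : k * k = 1 := by
      have : k = k⁻¹ := by linear_combination h
      calc k * k = k * k⁻¹ := by rw [← this]
        _ = 1 := mul_inv_cancel₀ hk0
    have : r * r = 1 := by
      have := congrArg (‖·‖) hk2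
      simpa [map_mul] using this
    nlinarith
  set D : ℝ := ‖k - k⁻¹‖ with hDdef
  have hD : 0 < D := by
    rw [hDdef]; exact norm_pos_iff.2 hkk
  have hsqrt : Real.sqrt (‖lam ^ 2 - 4‖) = D := by
    have hl : lam ^ 2 - 4 = (k - k⁻¹) ^ 2 := by
      rw [hlam]; field_simp; ring
    rw [hl, norm_pow, Real.sqrt_sq (norm_nonneg _)]
  set S : ℝ := ∑' n : ℤ, ‖v n‖ with hSdef
  have hS0 : 0 ≤ S := tsum_nonneg fun n => norm_nonneg _
  set a : ℤ → ℝ := fun m => Real.sqrt (‖v m‖) with hadef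
  have ha0 : ∀ m, 0 ≤ a m := fun m => Real.sqrt_nonneg _
  have ha2 : ∀ m, a m ^ 2 = ‖v m‖ := fun m =>
    Real.sq_sqrt (norm_nonneg _)
  -- matrix coefficients
  set c : ℤ × ℤ → ℂ := fun p =>
    (Real.sqrt (‖v p.1‖) : ℂ) * (k ^ (p.1 - p.2).natAbs / (k - k⁻¹))
      * ((Real.sqrt (‖v p.2‖) : ℂ) * csgn (v p.2)) with hcdef
  have hc1 : ∀ p : ℤ × ℤ,
      ‖c p‖ ≤ r ^ (p.1 - p.2).natAbs * (a p.1 * a p.2) / D := by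
    intro p
    have h1 : ‖c p‖ = a p.1 * (r ^ (p.1 - p.2).natAbs / D) * (a p.2 * ‖csgn (v p.2)‖) := by
      simp only [hcdef, norm_mul, norm_div, Complex.norm_real, Real.norm_eq_abs,
        abs_of_nonneg (Real.sqrt_nonneg _), norm_pow]
      rfl
    rw [h1]
    have h2 : a p.2 * ‖csgn (v p.2)‖ ≤ a p.2 * 1 :=
      mul_le_mul_of_nonneg_left (norm_csgn_le_one _) (ha0 _)
    have h3 : 0 ≤ a p.1 * (r ^ (p.1 - p.2).natAbs / D) :=
      mul_nonneg (ha0 _) (div_nonneg (pow_nonneg (norm_nonneg k) _) hD.le)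
    calc a p.1 * (r ^ (p.1 - p.2).natAbs / D) * (a p.2 * ‖csgn (v p.2)‖)
        ≤ a p.1 * (r ^ (p.1 - p.2).natAbs / D) * (a p.2 * 1) :=
          mul_le_mul_of_nonneg_left h2 h3
      _ = r ^ (p.1 - p.2).natAbs * (a p.1 * a p.2) / D := by ring
  have hc2 : ∀ p : ℤ × ℤ, ‖c p‖ ≤ a p.1 * a p.2 / D := by
    intro p
    refine (hc1 p).trans ?_
    have hr1 : r ^ (p.1 - p.2).natAbs ≤ 1 := pow_le_one₀ (norm_nonneg k) h1.le
    have : r ^ (p.1 - p.2).natAbs * (a p.1 * a p.2) ≤ 1 * (a p.1 * a p.2) :=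
      mul_le_mul_of_nonneg_right hr1 (mul_nonneg (ha0 _) (ha0 _))
    calc r ^ (p.1 - p.2).natAbs * (a p.1 * a p.2) / D ≤ 1 * (a p.1 * a p.2) / D :=
          (div_le_div_iff_of_pos_right hD).2 this
      _ = a p.1 * a p.2 / D := by ring
  -- summability of the coefficients
  have hgeo : Summable fun d : ℤ => r ^ d.natAbs := by
    have hgeon : Summable fun n : ℕ => r ^ n :=
      summable_geometric_of_lt_one (norm_nonneg k) h1
    refine Summable.of_nat_of_neg (hgeon.congr fun n => ?_) (hgeon.congr fun n => ?_) <;> simp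
  have hprod : Summable fun p : ℤ × ℤ => ‖v p.1‖ * r ^ p.2.natAbs :=
    hv.mul_of_nonneg hgeo (fun n => norm_nonneg _)
      (fun d => pow_nonneg (norm_nonneg k) _)
  have hg1 : Summable fun p : ℤ × ℤ => r ^ (p.1 - p.2).natAbs * ‖v p.1‖ := by
    have := (shearEquiv1.summable_iff
      (f := fun p : ℤ × ℤ => ‖v p.1‖ * r ^ p.2.natAbs)).2 hprod
    refine this.congr fun p => ?_
    simp [shearEquiv1, mul_comm]
  have hg2 : Summable fun p : ℤ × ℤ => r ^ (p.1 - p.2).natAbs * ‖v p.2‖ := by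
    have := (shearEquiv2.summable_iff
      (f := fun p : ℤ × ℤ => ‖v p.1‖ * r ^ p.2.natAbs)).2 hprod
    refine this.congr fun p => ?_
    simp [shearEquiv2, mul_comm]
  have hcsum : Summable fun p : ℤ × ℤ => ‖c p‖ := by
    refine Summable.of_nonneg_of_le (fun p => norm_nonneg _) (fun p => ?_)
      (((hg1.add hg2).div_const (2 * D)))
    refine (hc1 p).trans ?_
    have hkey : a p.1 * a p.2 ≤ (‖v p.1‖ + ‖v p.2‖) / 2 := by
      nlinarith [sq_nonneg (a p.1 - a p.2), ha2 p.1, ha2 p.2]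
    have h4 : r ^ (p.1 - p.2).natAbs * (a p.1 * a p.2)
        ≤ r ^ (p.1 - p.2).natAbs * ((‖v p.1‖ + ‖v p.2‖) / 2) :=
      mul_le_mul_of_nonneg_left hkey (pow_nonneg (norm_nonneg k) _)
    calc r ^ (p.1 - p.2).natAbs * (a p.1 * a p.2) / D
        ≤ r ^ (p.1 - p.2).natAbs * ((‖v p.1‖ + ‖v p.2‖) / 2) / D :=
          (div_le_div_iff_of_pos_right hD).2 h4
      _ = (r ^ (p.1 - p.2).natAbs * ‖v p.1‖
            + r ^ (p.1 - p.2).natAbs * ‖v p.2‖) / (2 * D) := by ring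
  -- the basis vectors
  set E : ℤ → l2Z := fun n => lp.single 2 n (1:ℂ) with hEdef
  have hEnorm : ∀ n, ‖E n‖ = 1 := by
    intro n
    have := lp.norm_single (p := 2) (E := fun _ : ℤ => ℂ) (by norm_num) n (1:ℂ)
    simpa [hEdef] using this
  have hEf : ∀ (n : ℤ) (f : l2Z), (inner ℂ (E n) f : ℂ) = f n := by
    intro n f
    rw [hEdef, lp.inner_single_left]; simp [RCLike.inner_apply]
  have hfE : ∀ (n : ℤ) (f : l2Z), (inner ℂ f (E n) : ℂ) = conj (f n) := by
    intro n f
    rw [hEdef, lp.inner_single_right]; simp [RCLike.inner_apply]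
  -- the rank-one pieces
  set T : ℤ × ℤ → (l2Z →L[ℂ] l2Z) := fun p =>
    c p • ((ContinuousLinearMap.toSpanSingleton ℂ (E p.1)).comp (innerSL ℂ (E p.2)))
    with hTdef
  have hTapp : ∀ (p : ℤ × ℤ) (x : l2Z), T p x = c p • ((inner ℂ (E p.2) x : ℂ) • E p.1) := by
    intro p x
    simp [hTdef, ContinuousLinearMap.toSpanSingleton_apply]
  have hTnorm : ∀ p, ‖T p‖ ≤ ‖c p‖ := by
    intro p
    rw [hTdef]
    calc ‖c p • ((ContinuousLinearMap.toSpanSingleton ℂ (E p.1)).comp (innerSL ℂ (E p.2)))‖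
        = ‖c p‖ * ‖(ContinuousLinearMap.toSpanSingleton ℂ (E p.1)).comp (innerSL ℂ (E p.2))‖ :=
          norm_smul _ _
      _ ≤ ‖c p‖ * (‖ContinuousLinearMap.toSpanSingleton ℂ (E p.1)‖ * ‖innerSL ℂ (E p.2)‖) := by
          refine mul_le_mul_of_nonneg_left (ContinuousLinearMap.opNorm_comp_le _ _)
            (norm_nonneg _)
      _ = ‖c p‖ * 1 := by
          rw [ContinuousLinearMap.norm_toSpanSingleton, innerSL_apply_norm, hEnorm, hEnorm]
          norm_num
      _ = ‖c p‖ := mul_one _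
  have hTsum : Summable T :=
    Summable.of_norm (Summable.of_nonneg_of_le (fun p => norm_nonneg _) hTnorm hcsum)
  set K : l2Z →L[ℂ] l2Z := ∑' p, T p with hKdef
  have hKapp : ∀ x : l2Z, K x = ∑' p, T p x := by
    intro x
    have h := (ContinuousLinearMap.apply ℂ l2Z x).map_tsum hTsum
    simpa [hKdef] using h
  have hTsumx : ∀ x : l2Z, Summable fun p => T p x := by
    intro x
    exact hTsum.map (ContinuousLinearMap.apply ℂ l2Z x) (ContinuousLinearMap.apply ℂ l2Z x).cont
  have hinner : ∀ (f x : l2Z), (inner ℂ f (K x) : ℂ) = ∑' p, (inner ℂ f (T p x) : ℂ) := by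
    intro f x
    rw [hKapp x]
    exact (innerSL ℂ f).map_tsum (hTsumx x)
  refine ⟨K, ?_, ?_⟩
  · -- matrix entries
    intro m n
    have hEE : ∀ i j : ℤ, (inner ℂ (E i) (E j) : ℂ) = if i = j then 1 else 0 := by
      intro i j
      rw [hEf]
      rcases eq_or_ne i j with h | h
      · subst h; simp [hEdef, lp.single_apply_self]
      · simp [hEdef, lp.single_apply_ne 2 j 1 h, h]
    have hterm : ∀ p : ℤ × ℤ,
        (inner ℂ (E m) (T p (E n)) : ℂ)
          = c p * (if p.2 = n then 1 else 0) * (if m = p.1 then 1 else 0) := by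
      intro p
      rw [hTapp, inner_smul_right, inner_smul_right, hEE, hEE]
      ring
    have : (inner ℂ (E m) (K (E n)) : ℂ) = ∑' p, (inner ℂ (E m) (T p (E n)) : ℂ) := hinner _ _
    rw [show (lp.single 2 m 1 : l2Z) = E m from rfl, show (lp.single 2 n 1 : l2Z) = E n from rfl,
      this]
    rw [tsum_eq_single (m, n) ?_]
    · rw [hterm]; simp [hcdef]
    · intro p hp
      rw [hterm]
      rcases eq_or_ne p.2 n with h2 | h2
      · have h1 : m ≠ p.1 := by
          intro h1
          exact hp (Prod.ext h1.symm h2)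
        simp [h1]
      · simp [h2]
  · -- norm bound
    rw [hsqrt]
    have key : ∀ f g : l2Z, ‖(inner ℂ f (K g) : ℂ)‖ ≤ S / D * ‖f‖ * ‖g‖ := by
      intro f g
      have hterm : ∀ p : ℤ × ℤ,
          (inner ℂ f (T p g) : ℂ) = c p * (g p.2) * conj (f p.1) := by
        intro p
        rw [hTapp, inner_smul_right, inner_smul_right, hEf, hfE]
        ring
      set X : ℤ → ℝ := fun i => a i * ‖f i‖ with hXdef
      set Y : ℤ → ℝ := fun i => a i * ‖g i‖ with hYdef
      have hX0 : ∀ i, 0 ≤ X i := fun i => mul_nonneg (ha0 i) (norm_nonneg _)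
      have hY0 : ∀ i, 0 ≤ Y i := fun i => mul_nonneg (ha0 i) (norm_nonneg _)
      have haS : Summable fun i : ℤ => a i ^ 2 := by
        refine hv.congr fun i => (ha2 i).symm
      have hXs : Summable X := by
        refine Summable.of_nonneg_of_le hX0 (fun i => ?_)
          ((haS.add (summable_sq_coe f)).div_const 2)
        simp only [hXdef]
        nlinarith [sq_nonneg (a i - ‖f i‖)]
      have hYs : Summable Y := by
        refine Summable.of_nonneg_of_le hY0 (fun i => ?_)
          ((haS.add (summable_sq_coe g)).div_const 2)
        simp only [hYdef]
        nlinarith [sq_nonneg (a i - ‖g i‖)]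
      have hXle : ∑' i, X i ≤ Real.sqrt S * ‖f‖ := by
        have := tsum_cs a (fun i => ‖f i‖) ha0 (fun i => norm_nonneg _) haS (summable_sq_coe f)
        rw [sqrt_tsum_sq f] at this
        calc ∑' i, X i ≤ Real.sqrt (∑' i, a i ^ 2) * ‖f‖ := this
          _ = Real.sqrt S * ‖f‖ := by
              rw [show (∑' i, a i ^ 2) = S from tsum_congr fun i => ha2 i]
      have hYle : ∑' i, Y i ≤ Real.sqrt S * ‖g‖ := by
        have := tsum_cs a (fun i => ‖g i‖) ha0 (fun i => norm_nonneg _) haS (summable_sq_coe g)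
        rw [sqrt_tsum_sq g] at this
        calc ∑' i, Y i ≤ Real.sqrt (∑' i, a i ^ 2) * ‖g‖ := this
          _ = Real.sqrt S * ‖g‖ := by
              rw [show (∑' i, a i ^ 2) = S from tsum_congr fun i => ha2 i]
      have hub : ∀ p : ℤ × ℤ, ‖(inner ℂ f (T p g) : ℂ)‖ ≤ X p.1 * Y p.2 / D := by
        intro p
        rw [hterm p]
        have h1 : ‖c p * (g p.2) * conj (f p.1)‖ = ‖c p‖ * ‖g p.2‖ * ‖f p.1‖ := by
          rw [norm_mul, norm_mul, RCLike.norm_conj]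
        rw [h1]
        have h2 : ‖c p‖ * ‖g p.2‖ * ‖f p.1‖ ≤ (a p.1 * a p.2 / D) * ‖g p.2‖ * ‖f p.1‖ := by
          refine mul_le_mul_of_nonneg_right (mul_le_mul_of_nonneg_right (hc2 p)
            (norm_nonneg _)) (norm_nonneg _)
        refine h2.trans (le_of_eq ?_)
        rw [hXdef, hYdef]; ring
      have hXY : Summable fun p : ℤ × ℤ => X p.1 * Y p.2 / D := by
        exact (hXs.mul_of_nonneg hYs hX0 hY0).div_const D
      have htsummable : Summable fun p : ℤ × ℤ => ‖(inner ℂ f (T p g) : ℂ)‖ :=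
        Summable.of_nonneg_of_le (fun p => norm_nonneg _) hub hXY
      have hXnorm : Summable fun i : ℤ => ‖X i‖ := by
        refine hXs.congr fun i => ?_
        rw [Real.norm_eq_abs, abs_of_nonneg (hX0 i)]
      have hYnorm : Summable fun i : ℤ => ‖Y i‖ := by
        refine hYs.congr fun i => ?_
        rw [Real.norm_eq_abs, abs_of_nonneg (hY0 i)]
      calc ‖(inner ℂ f (K g) : ℂ)‖
          = ‖∑' p, (inner ℂ f (T p g) : ℂ)‖ := by rw [hinner]
        _ ≤ ∑' p, ‖(inner ℂ f (T p g) : ℂ)‖ := norm_tsum_le_tsum_norm htsummable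
        _ ≤ ∑' p : ℤ × ℤ, X p.1 * Y p.2 / D := Summable.tsum_le_tsum hub htsummable hXY
        _ = (∑' p : ℤ × ℤ, X p.1 * Y p.2) / D := tsum_div_const
        _ = (∑' i, X i) * (∑' i, Y i) / D := by
            rw [← tsum_mul_tsum_of_summable_norm hXnorm hYnorm]
        _ ≤ (Real.sqrt S * ‖f‖) * (Real.sqrt S * ‖g‖) / D := by
            refine (div_le_div_iff_of_pos_right hD).2 (mul_le_mul hXle hYle
              (tsum_nonneg hY0) (by positivity))
        _ = (Real.sqrt S * Real.sqrt S) * (‖f‖ * ‖g‖) / D := by ring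
        _ = S / D * ‖f‖ * ‖g‖ := by rw [Real.mul_self_sqrt hS0]; ring
    have hC0 : 0 ≤ S / D := div_nonneg hS0 hD.le
    refine K.opNorm_le_bound hC0 fun g => ?_
    have h := key (K g) g
    have hself : ‖(inner ℂ (K g) (K g) : ℂ)‖ = ‖K g‖ ^ 2 := by
      rw [inner_self_eq_norm_sq_to_K]
      simp
    rw [hself] at h
    by_contra hcon
    push_neg at hcon
    have h5 : 0 ≤ S / D * ‖g‖ := mul_nonneg hC0 (norm_nonneg g)
    nlinarith [norm_nonneg (K g)]
end
end

section
/- Let $\upsilon \in \ell^1(\mathbb{Z})$ be a complex sequence, $H_0$ the discrete Laplacian on $\ell^2(\mathbb{Z})$ given by $(H_0\psi)_n = \psi_{n-1} + \psi_{n+1}$, and $V$ the diagonal operator $(V\psi)_n = \upsilon_n \psi_n$. Then every eigenvalue $\lambda$ of $H_V = H_0 + V$ with $\lambda \notin [-2,2]$ satisfies $|\lambda^2 - 4| \le \|\upsilon\|_{\ell^1(\mathbb{Z})}^2$. -/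
noncomputable section

open Complex in
lemma exists_root_small (lam : ℂ) (hlam : ∀ x ∈ Set.Icc (-2 : ℝ) 2, (x : ℂ) ≠ lam) :
    ∃ z : ℂ, z ≠ 0 ∧ ‖z‖ < 1 ∧ z * z + 1 = lam * z := by
  obtain ⟨s, hs⟩ := IsAlgClosed.exists_pow_nat_eq (k := ℂ) (lam ^ 2 - 4) (n := 2) (by norm_num)
  set a : ℂ := (lam - s) / 2 with ha
  set b : ℂ := (lam + s) / 2 with hb
  have hab : a * b = 1 := by rw [ha, hb]; field_simp; linear_combination -hs
  have haeq : a * a + 1 = lam * a := by rw [ha]; field_simp; linear_combination hs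
  have hbeq : b * b + 1 = lam * b := by rw [hb]; field_simp; linear_combination hs
  have ha0 : a ≠ 0 := left_ne_zero_of_mul_eq_one hab
  have hb0 : b ≠ 0 := right_ne_zero_of_mul_eq_one hab
  have habs : ‖a‖ * ‖b‖ = 1 := by
    rw [← norm_mul, hab, norm_one]
  -- rule out |w| = 1 for a root w
  have hnotone : ∀ w : ℂ, w * w + 1 = lam * w → ‖w‖ ≠ 1 := by
    intro w hw h1
    have hw0 : w ≠ 0 := by intro h; rw [h] at hw; simp at hw
    have hinv : w⁻¹ = (starRingEnd ℂ) w := by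
      rw [Complex.inv_def, Complex.normSq_eq_norm_sq, h1]
      simp
    have hl : lam = w + w⁻¹ := by field_simp; linear_combination -hw
    have : lam = ((2 * w.re : ℝ) : ℂ) := by
      rw [hl, hinv, Complex.add_conj]
    refine hlam (2 * w.re) ?_ this.symm
    have := Complex.abs_re_le_norm w
    rw [h1] at this
    constructor <;> [nlinarith [abs_le.mp this]; nlinarith [abs_le.mp this]]
  rcases lt_trichotomy (‖a‖) 1 with h | h | h
  · exact ⟨a, ha0, h, haeq⟩
  · exact absurd h (hnotone a haeq)
  · refine ⟨b, hb0, ?_, hbeq⟩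
    by_contra hc
    push_neg at hc
    have : 1 < ‖a‖ * ‖b‖ := by
      calc 1 = 1 * 1 := by ring
      _ < ‖a‖ * ‖b‖ := by
        apply mul_lt_mul h hc one_pos (norm_nonneg a)
    rw [habs] at this; exact lt_irrefl 1 this

/-- for `v ∈ ℓ¹(ℤ)` and the discrete Schrödinger operator
`H_V = H₀ + V` on `ℓ²(ℤ)` (acting by `(H_V ψ)_n = ψ_{n-1} + ψ_{n+1} + v_n ψ_n`),
every eigenvalue `λ ∉ [-2,2]` satisfies `|λ² - 4| ≤ ‖v‖_{ℓ¹}²`. -/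
theorem stmt6 (v : ℤ → ℂ) (hv : Summable fun n => ‖v n‖)
    (HV : l2Z →L[ℂ] l2Z)
    (hHV : ∀ (ψ : l2Z) (n : ℤ), (HV ψ) n = ψ (n - 1) + ψ (n + 1) + v n * ψ n)
    (lam : ℂ) (hlam : ∀ x ∈ Set.Icc (-2 : ℝ) 2, (x : ℂ) ≠ lam)
    (ψ : l2Z) (hψ : ψ ≠ 0) (heig : HV ψ = lam • ψ) :
    ‖lam ^ 2 - 4‖ ≤ (∑' n : ℤ, ‖v n‖) ^ 2 := by
  obtain ⟨z, hz0, hz1, hzeq⟩ := exists_root_small lam hlam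
  -- z - z⁻¹ ≠ 0
  have hzz : z - z⁻¹ ≠ 0 := by
    intro h
    have h2 : z * z = 1 := by
      field_simp at h
      linear_combination h
    have : ‖z‖ * ‖z‖ = 1 := by
      rw [← norm_mul, h2, norm_one]
    nlinarith [norm_nonneg z]
  set c : ℂ := (z - z⁻¹)⁻¹ with hc
  have hc0 : c ≠ 0 := inv_ne_zero hzz
  -- the kernel
  set G : ℤ → ℤ → ℂ := fun n m => z ^ (n - m).natAbs * c with hG
  have hGabs : ∀ n m, ‖G n m‖ ≤ ‖c‖ := by
    intro n m
    rw [hG]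
    simp only [norm_mul, norm_pow]
    calc ‖z‖ ^ (n - m).natAbs * ‖c‖
        ≤ 1 * ‖c‖ := by
          apply mul_le_mul_of_nonneg_right _ (norm_nonneg c)
          exact pow_le_one₀ (norm_nonneg z) hz1.le
      _ = ‖c‖ := one_mul _
  -- eigen equation pointwise
  have heq : ∀ n : ℤ, ψ (n - 1) + ψ (n + 1) + v n * ψ n = lam * ψ n := by
    intro n
    have h1 := hHV ψ n
    have h2 : (HV ψ) n = (lam • ψ) n := by rw [heig]
    rw [h2] at h1
    rw [lp.coeFn_smul] at h1
    simpa using h1.symm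
  -- bound on ψ entries
  have hψbd : ∀ n : ℤ, ‖ψ n‖ ≤ ‖ψ‖ := by
    intro n
    have := lp.norm_apply_le_norm (E := fun _ : ℤ => ℂ) (p := 2) (by norm_num) ψ n
    simpa using this
  -- summability of v * ψ
  have hw : Summable fun m => ‖v m‖ * ‖ψ m‖ := by
    apply Summable.of_nonneg_of_le (fun m => by positivity)
      (fun m => mul_le_mul_of_nonneg_left (hψbd m) (norm_nonneg _))
    exact hv.mul_right _
  have hGsum : ∀ n : ℤ, Summable fun m => G n m * (v m * ψ m) := by
    intro n
    apply Summable.of_norm_bounded (g := fun m => ‖c‖ * (‖v m‖ * ‖ψ m‖))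
      (hw.mul_left _)
    intro m
    simp only [norm_mul]
    exact mul_le_mul_of_nonneg_right (hGabs n m) (by positivity)
  set F : ℤ → ℂ := fun n => ∑' m, G n m * (v m * ψ m) with hF
  -- kernel identity
  have hker : ∀ n m : ℤ, G (n - 1) m + G (n + 1) m - lam * G n m
      = if n = m then 1 else 0 := by
    intro n m
    rcases lt_trichotomy n m with h | h | h
    · obtain ⟨j, hj⟩ : ∃ j : ℕ, m - n = (j : ℤ) + 1 := ⟨(m - n - 1).toNat, by omega⟩
      have e1 : (n - 1 - m).natAbs = j + 2 := by omega
      have e2 : (n + 1 - m).natAbs = j := by omega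
      have e3 : (n - m).natAbs = j + 1 := by omega
      rw [hG]
      simp only [e1, e2, e3, if_neg (by omega : ¬ n = m)]
      linear_combination (z ^ j * c) * hzeq
    · rw [hG]
      have e1 : (n - 1 - m).natAbs = 1 := by omega
      have e2 : (n + 1 - m).natAbs = 1 := by omega
      have e3 : (n - m).natAbs = 0 := by omega
      simp only [e1, e2, e3, if_pos h, pow_zero, pow_one, one_mul]
      have h4 : z - z⁻¹ = 2 * z - lam := by
        field_simp
        linear_combination -hzeq
      have h5 : (2 * z - lam) * c = 1 := by
        rw [hc, ← h4]
        exact mul_inv_cancel₀ hzz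
      linear_combination h5
    · obtain ⟨j, hj⟩ : ∃ j : ℕ, n - m = (j : ℤ) + 1 := ⟨(n - m - 1).toNat, by omega⟩
      have e1 : (n - 1 - m).natAbs = j := by omega
      have e2 : (n + 1 - m).natAbs = j + 2 := by omega
      have e3 : (n - m).natAbs = j + 1 := by omega
      rw [hG]
      simp only [e1, e2, e3, if_neg (by omega : ¬ n = m)]
      linear_combination (z ^ j * c) * hzeq
  -- resolvent equation for F
  have hkey : ∀ n : ℤ, F (n - 1) + F (n + 1) - lam * F n = v n * ψ n := by
    intro n
    have e : F (n - 1) + F (n + 1) - lam * F n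
        = ∑' m, (G (n - 1) m * (v m * ψ m) + G (n + 1) m * (v m * ψ m)
            - lam * (G n m * (v m * ψ m))) := by
      rw [Summable.tsum_sub ((hGsum (n - 1)).add (hGsum (n + 1))) ((hGsum n).mul_left lam),
        Summable.tsum_add (hGsum (n - 1)) (hGsum (n + 1)), tsum_mul_left]
    rw [e, tsum_congr (fun m => by rw [← hker n m]; ring :
      ∀ m : ℤ, G (n - 1) m * (v m * ψ m) + G (n + 1) m * (v m * ψ m)
          - lam * (G n m * (v m * ψ m)) = (if n = m then 1 else 0) * (v m * ψ m)),
      tsum_eq_single n (fun m hm => by rw [if_neg (fun h => hm h.symm), zero_mul]),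
      if_pos rfl, one_mul]
  -- φ := ψ + F satisfies the free recurrence
  set φ : ℤ → ℂ := fun n => ψ n + F n with hφ
  have hφrec : ∀ n : ℤ, φ (n - 1) + φ (n + 1) = lam * φ n := by
    intro n
    have h1 := heq n
    have h2 := hkey n
    simp only [hφ]
    linear_combination h1 + h2
  -- bounds
  set T : ℝ := ∑' m : ℤ, ‖v m‖ with hT
  have hT0 : 0 ≤ T := tsum_nonneg fun m => norm_nonneg _
  have hGnorm : ∀ n : ℤ, Summable fun m => ‖G n m * (v m * ψ m)‖ := by
    intro n
    apply Summable.of_nonneg_of_le (fun m => norm_nonneg _)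
      (fun m => ?_) (hw.mul_left (‖c‖))
    rw [norm_mul (G n m), norm_mul (v m)]
    exact mul_le_mul_of_nonneg_right (hGabs n m)
      (mul_nonneg (norm_nonneg _) (norm_nonneg _))
  have hvS : ∀ S : ℝ, (∀ m : ℤ, ‖ψ m‖ ≤ S) →
      ∀ n : ℤ, ‖F n‖ ≤ ‖c‖ * (T * S) := by
    intro S hSle n
    have hS0 : 0 ≤ S := le_trans (norm_nonneg _) (hSle 0)
    calc ‖F n‖ ≤ ∑' m, ‖G n m * (v m * ψ m)‖ := by
          simpa using
            norm_tsum_le_tsum_norm (f := fun m => G n m * (v m * ψ m)) (hGnorm n)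
      _ ≤ ∑' m, ‖c‖ * (‖v m‖ * S) := by
          apply Summable.tsum_le_tsum _ (hGnorm n) (((hv.mul_right S)).mul_left (‖c‖))
          intro m
          rw [norm_mul (G n m), norm_mul (v m)]
          have h1 : ‖G n m‖ * (‖v m‖ * ‖ψ m‖)
              ≤ ‖c‖ * (‖v m‖ * ‖ψ m‖) :=
            mul_le_mul_of_nonneg_right (hGabs n m) (by positivity)
          have h2 : ‖c‖ * (‖v m‖ * ‖ψ m‖)
              ≤ ‖c‖ * (‖v m‖ * S) := by
            apply mul_le_mul_of_nonneg_left _ (norm_nonneg c)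
            exact mul_le_mul_of_nonneg_left (hSle m) (norm_nonneg _)
          exact le_trans h1 h2
      _ = ‖c‖ * (T * S) := by
          rw [tsum_mul_left, hT, ← tsum_mul_right]
  have hFbd : ∀ n : ℤ, ‖F n‖ ≤ ‖c‖ * (T * ‖ψ‖) := hvS ‖ψ‖ hψbd
  set C : ℝ := ‖ψ‖ + ‖c‖ * (T * ‖ψ‖) with hC
  have hC0 : 0 ≤ C := by
    rw [hC]
    have := norm_nonneg ψ
    positivity
  have hφbd : ∀ n : ℤ, ‖φ n‖ ≤ C := by
    intro n
    simp only [hφ]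
    calc ‖ψ n + F n‖ ≤ ‖ψ n‖ + ‖F n‖ :=
          norm_add_le _ _
      _ ≤ C := add_le_add (hψbd n) (hFbd n)
  -- the difference sequence
  set u : ℤ → ℂ := fun n => φ (n + 1) - z * φ n with hu
  have hurec : ∀ n : ℤ, u n = z * u (n + 1) := by
    intro n
    have hr : φ n + φ (n + 1 + 1) = lam * φ (n + 1) := by
      have := hφrec (n + 1)
      simpa using this
    simp only [hu]
    linear_combination (-z) * hr + φ (n + 1) * hzeq
  have hubd : ∀ n : ℤ, ‖u n‖ ≤ C + C := by
    intro n
    simp only [hu]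
    calc ‖φ (n + 1) - z * φ n‖
        ≤ ‖φ (n + 1)‖ + ‖z * φ n‖ := by
          simpa [sub_eq_add_neg, norm_neg] using
            norm_add_le (φ (n + 1)) (-(z * φ n))
      _ ≤ C + C := by
          apply add_le_add (hφbd _)
          rw [norm_mul]
          calc ‖z‖ * ‖φ n‖ ≤ 1 * C := by
                apply mul_le_mul hz1.le (hφbd n) (norm_nonneg _) zero_le_one
            _ = C := one_mul C
  have hiter : ∀ k : ℕ, ∀ n : ℤ, u n = z ^ k * u (n + k) := by
    intro k
    induction k with
    | zero => intro n; simp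
    | succ k ih =>
      intro n
      rw [hurec n, ih (n + 1)]
      have he : n + 1 + (k : ℤ) = n + ((k : ℕ) + 1 : ℕ) := by push_cast; ring
      rw [he]
      ring
  have habszk : Filter.Tendsto (fun k : ℕ => ‖z‖ ^ k * (C + C))
      Filter.atTop (nhds 0) := by
    have h := tendsto_pow_atTop_nhds_zero_of_lt_one (norm_nonneg z) hz1
    simpa using h.mul_const (C + C)
  have hu0 : ∀ n : ℤ, u n = 0 := by
    intro n
    have hb : ∀ k : ℕ, ‖u n‖ ≤ ‖z‖ ^ k * (C + C) := by
      intro k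
      rw [hiter k n, norm_mul, norm_pow]
      exact mul_le_mul_of_nonneg_left (hubd _) (by positivity)
    have hle : ‖u n‖ ≤ 0 := ge_of_tendsto' habszk hb
    have : ‖u n‖ = 0 := le_antisymm hle (norm_nonneg _)
    exact norm_eq_zero.mp this
  have hstep : ∀ n : ℤ, φ n = z * φ (n - 1) := by
    intro n
    have := hu0 (n - 1)
    simp only [hu] at this
    have h2 : φ (n - 1 + 1) = z * φ (n - 1) := by linear_combination this
    simpa using h2
  have hφiter : ∀ k : ℕ, ∀ n : ℤ, φ n = z ^ k * φ (n - k) := by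
    intro k
    induction k with
    | zero => intro n; simp
    | succ k ih =>
      intro n
      rw [hstep n, ih (n - 1)]
      have he : n - 1 - (k : ℤ) = n - ((k : ℕ) + 1 : ℕ) := by push_cast; ring
      rw [he]
      ring
  have habszkC : Filter.Tendsto (fun k : ℕ => ‖z‖ ^ k * C)
      Filter.atTop (nhds 0) := by
    have h := tendsto_pow_atTop_nhds_zero_of_lt_one (norm_nonneg z) hz1
    simpa using h.mul_const C
  have hφ0 : ∀ n : ℤ, φ n = 0 := by
    intro n
    have hb : ∀ k : ℕ, ‖φ n‖ ≤ ‖z‖ ^ k * C := by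
      intro k
      rw [hφiter k n, norm_mul, norm_pow]
      exact mul_le_mul_of_nonneg_left (hφbd _) (by positivity)
    have hle : ‖φ n‖ ≤ 0 := ge_of_tendsto' habszkC hb
    have : ‖φ n‖ = 0 := le_antisymm hle (norm_nonneg _)
    exact norm_eq_zero.mp this
  have hψF : ∀ n : ℤ, ‖ψ n‖ = ‖F n‖ := by
    intro n
    have := hφ0 n
    simp only [hφ] at this
    have h2 : (ψ n : ℂ) = -F n := by linear_combination this
    rw [h2, norm_neg]
  -- supremum argument
  set S : ℝ := ⨆ n : ℤ, ‖ψ n‖ with hS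
  have hbdd : BddAbove (Set.range fun n : ℤ => ‖ψ n‖) := by
    refine ⟨‖ψ‖, ?_⟩
    rintro x ⟨n, rfl⟩
    exact hψbd n
  have hSle : ∀ n : ℤ, ‖ψ n‖ ≤ S := fun n => le_ciSup hbdd n
  have hSpos : 0 < S := by
    have hex : ∃ n : ℤ, (ψ n : ℂ) ≠ 0 := by
      by_contra hcon
      push_neg at hcon
      exact hψ (lp.ext (by funext n; simpa using hcon n))
    obtain ⟨n, hn⟩ := hex
    exact lt_of_lt_of_le (norm_pos_iff.mpr hn) (hSle n)
  have hmain : ∀ n : ℤ, ‖ψ n‖ ≤ ‖c‖ * T * S := by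
    intro n
    rw [hψF n]
    calc ‖F n‖ ≤ ‖c‖ * (T * S) := hvS S hSle n
      _ = ‖c‖ * T * S := by ring
  have hineq : S ≤ ‖c‖ * T * S := ciSup_le hmain
  have h1c : 1 ≤ ‖c‖ * T := by
    by_contra hcon
    push_neg at hcon
    nlinarith
  have habsc : ‖c‖ = (‖z - z⁻¹‖)⁻¹ := by rw [hc, norm_inv]
  have hr0 : 0 < ‖z - z⁻¹‖ := norm_pos_iff.mpr hzz
  have hrT : ‖z - z⁻¹‖ ≤ T := by
    rw [habsc, inv_mul_eq_div] at h1c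
    exact (one_le_div hr0).mp h1c
  have hid : lam ^ 2 - 4 = (z - z⁻¹) ^ 2 := by
    field_simp
    linear_combination (-(lam * z + z * z + 1)) * hzeq
  rw [hid, norm_pow]
  exact pow_le_pow_left₀ hr0.le hrT 2
end
end

section
/- Let $\upsilon \in \ell^1(\mathbb{Z})$ be a complex sequence, and let $H_V = H_0 + V$ be the discrete Schrödinger operator on $\ell^2(\mathbb{Z})$. Then $H_V$ has no eigenvalues in the open interval $(-2,2)$. -/
noncomputable section

namespace Stmt7Aux

/-- The quadratic form controlling transfer-matrix norms in the elliptic regime. -/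
def Qf (lam : ℝ) (a b : ℂ) : ℝ :=
  Complex.normSq a + Complex.normSq b - lam * (starRingEnd ℂ a * b).re

lemma Qf_diff (lam : ℝ) (a b w : ℂ) :
    Qf lam b (((lam : ℂ) - w) * b - a)
      = Qf lam a b + ((Complex.normSq w - lam * w.re) * Complex.normSq b
          + 2 * (w * b * starRingEnd ℂ a).re) := by
  simp only [Qf, Complex.normSq_apply, Complex.mul_re, Complex.mul_im,
    Complex.sub_re, Complex.sub_im, Complex.ofReal_re, Complex.ofReal_im,
    Complex.conj_re, Complex.conj_im]
  ring

lemma Qf_lower (lam : ℝ) (a b : ℂ) :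
    (2 - |lam|) / 2 * (Complex.normSq a + Complex.normSq b) ≤ Qf lam a b := by
  have h1 : |(starRingEnd ℂ a * b).re| ≤ ‖a‖ * ‖b‖ := by
    calc |(starRingEnd ℂ a * b).re| ≤ ‖starRingEnd ℂ a * b‖ :=
          Complex.abs_re_le_norm _
      _ = ‖a‖ * ‖b‖ := by simp [map_mul]
  have h2 : 2 * (‖a‖ * ‖b‖) ≤ Complex.normSq a + Complex.normSq b := by
    have := sq_nonneg (‖a‖ - ‖b‖)
    rw [Complex.normSq_eq_norm_sq, Complex.normSq_eq_norm_sq]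
    nlinarith
  have h3 : lam * (starRingEnd ℂ a * b).re ≤ |lam| * (‖a‖ * ‖b‖) := by
    calc lam * (starRingEnd ℂ a * b).re ≤ |lam * (starRingEnd ℂ a * b).re| := le_abs_self _
      _ = |lam| * |(starRingEnd ℂ a * b).re| := abs_mul _ _
      _ ≤ |lam| * (‖a‖ * ‖b‖) :=
          mul_le_mul_of_nonneg_left h1 (abs_nonneg _)
  have hl : 0 ≤ |lam| := abs_nonneg _
  unfold Qf
  nlinarith

lemma Qf_nonneg (lam : ℝ) (hlam : |lam| < 2) (a b : ℂ) : 0 ≤ Qf lam a b := by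
  have := Qf_lower lam a b
  have h0 : (0:ℝ) ≤ Complex.normSq a + Complex.normSq b :=
    add_nonneg (Complex.normSq_nonneg _) (Complex.normSq_nonneg _)
  nlinarith

lemma Qf_pos (lam : ℝ) (hlam : |lam| < 2) (a b : ℂ) (h : ¬(a = 0 ∧ b = 0)) :
    0 < Qf lam a b := by
  have := Qf_lower lam a b
  have h0 : 0 < Complex.normSq a + Complex.normSq b := by
    rcases Classical.em (a = 0) with ha | ha
    · have hb : b ≠ 0 := fun hb => h ⟨ha, hb⟩
      have := Complex.normSq_pos.2 hb
      have := Complex.normSq_nonneg a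
      linarith
    · have := Complex.normSq_pos.2 ha
      have := Complex.normSq_nonneg b
      linarith
  nlinarith

lemma Qdelta_bound (lam : ℝ) (a b w : ℂ) (hw : ‖w‖ ≤ 1) :
    |(Complex.normSq w - lam * w.re) * Complex.normSq b + 2 * (w * b * starRingEnd ℂ a).re|
      ≤ ‖w‖ * (2 + |lam|) * (Complex.normSq a + Complex.normSq b) := by
  have hwa : 0 ≤ ‖w‖ := norm_nonneg w
  have hna : 0 ≤ Complex.normSq a := Complex.normSq_nonneg a
  have hnb : 0 ≤ Complex.normSq b := Complex.normSq_nonneg b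
  have h1 : |Complex.normSq w - lam * w.re| ≤ ‖w‖ * (1 + |lam|) := by
    have hre : |w.re| ≤ ‖w‖ := Complex.abs_re_le_norm w
    have hsq : Complex.normSq w = ‖w‖ ^ 2 := Complex.normSq_eq_norm_sq w
    have : |lam * w.re| ≤ |lam| * ‖w‖ := by
      rw [abs_mul]; exact mul_le_mul_of_nonneg_left hre (abs_nonneg _)
    have habs := abs_sub (Complex.normSq w) (lam * w.re)
    rw [abs_of_nonneg (Complex.normSq_nonneg w)] at habs
    nlinarith
  have h2 : |2 * (w * b * starRingEnd ℂ a).re|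
      ≤ ‖w‖ * (Complex.normSq a + Complex.normSq b) := by
    have : |(w * b * starRingEnd ℂ a).re| ≤ ‖w‖ * ‖b‖ * ‖a‖ := by
      calc |(w * b * starRingEnd ℂ a).re| ≤ ‖w * b * starRingEnd ℂ a‖ :=
            Complex.abs_re_le_norm _
        _ = ‖w‖ * ‖b‖ * ‖a‖ := by simp [map_mul]
    have h2ab : 2 * (‖a‖ * ‖b‖) ≤ Complex.normSq a + Complex.normSq b := by
      have := sq_nonneg (‖a‖ - ‖b‖)
      rw [Complex.normSq_eq_norm_sq, Complex.normSq_eq_norm_sq]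
      nlinarith
    rw [abs_mul, abs_two]
    nlinarith [mul_le_mul_of_nonneg_left h2ab hwa, mul_nonneg (mul_nonneg hwa hnb) hna]
  calc |(Complex.normSq w - lam * w.re) * Complex.normSq b + 2 * (w * b * starRingEnd ℂ a).re|
      ≤ |(Complex.normSq w - lam * w.re) * Complex.normSq b|
          + |2 * (w * b * starRingEnd ℂ a).re| := abs_add_le _ _
    _ ≤ ‖w‖ * (2 + |lam|) * (Complex.normSq a + Complex.normSq b) := by
        rw [abs_mul, abs_of_nonneg hnb]
        nlinarith [mul_le_mul_of_nonneg_right h1 hnb,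
          mul_nonneg (mul_nonneg hwa hna) (abs_nonneg lam), mul_nonneg hwa hna]

lemma prod_lower (q c : ℕ → ℝ) (hq0 : ∀ k, 0 ≤ q k) (hc0 : ∀ k, 0 ≤ c k)
    (hc1 : ∀ k, c k ≤ 1) (hrec : ∀ k, (1 - c k) * q k ≤ q (k + 1)) :
    ∀ k, (1 - ∑ i ∈ Finset.range k, c i) * q 0 ≤ q k := by
  intro k
  induction k with
  | zero => simp
  | succ k ih =>
    have hS : 0 ≤ ∑ i ∈ Finset.range k, c i := Finset.sum_nonneg fun i _ => hc0 i
    have h1 : (1 - ∑ i ∈ Finset.range (k+1), c i) * q 0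
        ≤ (1 - c k) * ((1 - ∑ i ∈ Finset.range k, c i) * q 0) := by
      rw [Finset.sum_range_succ]
      nlinarith [mul_nonneg (mul_nonneg (hc0 k) hS) (hq0 0)]
    calc (1 - ∑ i ∈ Finset.range (k+1), c i) * q 0
        ≤ (1 - c k) * ((1 - ∑ i ∈ Finset.range k, c i) * q 0) := h1
      _ ≤ (1 - c k) * q k := by
          apply mul_le_mul_of_nonneg_left ih; linarith [hc1 k]
      _ ≤ q (k+1) := hrec k

end Stmt7Aux

open Stmt7Aux Filter Topology in
/-- for `v ∈ ℓ¹(ℤ)`, the discrete Schrödinger operator `H_V = H₀ + V`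
on `ℓ²(ℤ)` has no eigenvalues in the open interval `(-2, 2)`. -/
theorem stmt7 (v : ℤ → ℂ) (hv : Summable fun n => ‖v n‖)
    (HV : l2Z →L[ℂ] l2Z)
    (hHV : ∀ (ψ : l2Z) (n : ℤ), (HV ψ) n = ψ (n - 1) + ψ (n + 1) + v n * ψ n)
    (lam : ℝ) (hlam : lam ∈ Set.Ioo (-2 : ℝ) 2)
    (ψ : l2Z) (heig : HV ψ = (lam : ℂ) • ψ) :
    ψ = 0 := by
  by_contra hne
  set F : ℤ → ℂ := fun n => ψ n with hFdef
  -- the eigenvalue equation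
  have heq : ∀ n : ℤ, F (n - 1) + F (n + 1) + v n * F n = (lam : ℂ) * F n := by
    intro n
    have h1 := hHV ψ n
    rw [heig] at h1
    have h2 : ((lam : ℂ) • ψ : l2Z) n = (lam : ℂ) * ψ n := by
      rw [lp.coeFn_smul]; simp
    rw [h2] at h1
    exact h1.symm
  have hfwd : ∀ m : ℤ, F (m + 1) = ((lam : ℂ) - v m) * F m - F (m - 1) := by
    intro m; linear_combination heq m
  have hbwd : ∀ m : ℤ, F (m - 1) = ((lam : ℂ) - v m) * F m - F (m + 1) := by
    intro m; linear_combination heq m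
  have hstep : ∀ n : ℤ, F (n + 2) = ((lam : ℂ) - v (n + 1)) * F (n + 1) - F n := by
    intro n
    have h := hfwd (n + 1)
    rw [show n + 1 - 1 = n by ring] at h
    rw [show n + 2 = n + 1 + 1 by ring]
    exact h
  -- some coordinate is nonzero
  have hFn0 : ∃ n, F n ≠ 0 := by
    by_contra h
    push_neg at h
    exact hne (lp.ext (funext h))
  -- no two consecutive zeros
  have hpair : ∀ n : ℤ, ¬(F n = 0 ∧ F (n + 1) = 0) := by
    rintro n ⟨h0, h1⟩
    obtain ⟨n₀, hn₀⟩ := hFn0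
    apply hn₀
    have fwd : ∀ k : ℕ, F (n + k) = 0 ∧ F (n + k + 1) = 0 := by
      intro k
      induction k with
      | zero => simpa using ⟨h0, h1⟩
      | succ k ih =>
        constructor
        · rw [show (n + (k + 1 : ℕ) : ℤ) = n + k + 1 by push_cast; ring]
          exact ih.2
        · rw [show (n + (k + 1 : ℕ) + 1 : ℤ) = n + k + 2 by push_cast; ring,
            hstep (n + k), ih.1, ih.2]
          ring
    have bwd : ∀ k : ℕ, F (n - k) = 0 ∧ F (n - k + 1) = 0 := by
      intro k
      induction k with
      | zero => simpa using ⟨h0, h1⟩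
      | succ k ih =>
        constructor
        · rw [show (n - (k + 1 : ℕ) : ℤ) = n - k - 1 by push_cast; ring,
            hbwd (n - k), ih.1, ih.2]
          ring
        · rw [show (n - (k + 1 : ℕ) + 1 : ℤ) = n - k by push_cast; ring]
          exact ih.1
    rcases le_or_gt n n₀ with h | h
    · have hk := (fwd (n₀ - n).toNat).1
      rwa [show (n + ((n₀ - n).toNat : ℤ)) = n₀ by
        rw [Int.toNat_of_nonneg (by omega)]; ring] at hk
    · have hk := (bwd (n - n₀).toNat).1
      rwa [show (n - ((n - n₀).toNat : ℤ)) = n₀ by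
        rw [Int.toNat_of_nonneg (by omega)]; ring] at hk
  -- constants
  have hlamabs : |lam| < 2 := abs_lt.2 ⟨hlam.1, hlam.2⟩
  set δ : ℝ := 2 - |lam| with hδdef
  have hδ : 0 < δ := by simp only [hδdef]; linarith
  set K : ℝ := 2 * (2 + |lam|) / δ with hKdef
  have hKδ : K * δ = 2 * (2 + |lam|) := by
    rw [hKdef, div_mul_cancel₀ _ hδ.ne']
  have hK1 : 1 ≤ K := by
    rw [hKdef, le_div_iff₀ hδ]
    have := abs_nonneg lam
    linarith
  have hK0 : 0 < K := lt_of_lt_of_le one_pos hK1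
  -- choose a finset capturing most of the ℓ¹ mass
  have hev : ∀ᶠ t in atTop, (∑' n, ‖v n‖) - 1 / (2 * K)
      < ∑ n ∈ t, ‖v n‖ := by
    apply hv.hasSum.eventually
    apply eventually_gt_nhds
    have : 0 < 1 / (2 * K) := by positivity
    linarith
  obtain ⟨s₀, hs₀⟩ := Filter.eventually_atTop.1 hev
  have hs₀self := hs₀ s₀ le_rfl
  have htail : ∀ T : Finset ℤ, Disjoint s₀ T →
      ∑ n ∈ T, ‖v n‖ ≤ 1 / (2 * K) := by
    intro T hdis
    have h1 : ∑ n ∈ s₀ ∪ T, ‖v n‖ ≤ ∑' n, ‖v n‖ :=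
      Summable.sum_le_tsum _ (fun i _ => norm_nonneg _) hv
    rw [Finset.sum_union hdis] at h1
    linarith
  obtain ⟨N, hN⟩ := s₀.exists_le
  -- the sequences
  set q : ℕ → ℝ := fun k => Qf lam (F (N + k)) (F (N + k + 1)) with hqdef
  set c : ℕ → ℝ := fun k => K * ‖v (N + k + 1)‖ with hcdef
  have hdisj : ∀ T : Finset ℤ, (∀ m ∈ T, N + 1 ≤ m) → Disjoint s₀ T := by
    intro T hT
    rw [Finset.disjoint_left]
    intro m hm hmT
    have := hN m hm
    have := hT m hmT
    omega
  have hsmall : ∀ k : ℕ, ‖v (N + k + 1)‖ ≤ 1 / (2 * K) := by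
    intro k
    have := htail {N + k + 1} (hdisj _ (by intro m hm; simp at hm; omega))
    simpa using this
  have hc0 : ∀ k, 0 ≤ c k := fun k => mul_nonneg hK0.le (norm_nonneg _)
  have hchalf : ∀ k, c k ≤ 1 / 2 := by
    intro k
    have h1 : c k ≤ K * (1 / (2 * K)) :=
      mul_le_mul_of_nonneg_left (hsmall k) hK0.le
    have h2 : K * (1 / (2 * K)) = 1 / 2 := by field_simp
    linarith
  have hc1 : ∀ k, c k ≤ 1 := fun k => le_trans (hchalf k) (by norm_num)
  have hwsmall : ∀ k : ℕ, ‖v (N + k + 1)‖ ≤ 1 := by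
    intro k
    have h2 : 1 / (2 * K) ≤ 1 := by
      rw [div_le_one (by positivity)]; linarith
    exact le_trans (hsmall k) h2
  have hq0 : ∀ k, 0 ≤ q k := fun k => Qf_nonneg lam hlamabs _ _
  -- the key recurrence inequality
  have hrec : ∀ k : ℕ, (1 - c k) * q k ≤ q (k + 1) := by
    intro k
    set a : ℂ := F (N + k) with hadef
    set b : ℂ := F (N + k + 1) with hbdef
    set w : ℂ := v (N + k + 1) with hwdef
    have hq1 : q (k + 1) = Qf lam b (((lam : ℂ) - w) * b - a) := by
      have e0 : q (k + 1) = Qf lam (F (N + ((k : ℕ) + 1 : ℕ)))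
          (F (N + ((k : ℕ) + 1 : ℕ) + 1)) := rfl
      rw [e0, show (N + ((k : ℕ) + 1 : ℕ) + 1 : ℤ) = N + k + 2 by push_cast; ring,
        show (N + ((k : ℕ) + 1 : ℕ) : ℤ) = N + k + 1 by push_cast; ring, hstep (N + k)]
    rw [hq1, Qf_diff]
    have hΔ := Qdelta_bound lam a b w (hwsmall k)
    have hlow := Qf_lower lam a b
    have h2low : δ * (Complex.normSq a + Complex.normSq b) ≤ 2 * Qf lam a b := by
      rw [hδdef]; linarith
    have hwa : 0 ≤ ‖w‖ := norm_nonneg w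
    have key : ‖w‖ * (2 + |lam|) * (Complex.normSq a + Complex.normSq b)
        ≤ K * ‖w‖ * Qf lam a b := by
      have h3 := mul_le_mul_of_nonneg_left h2low (mul_nonneg hwa hK0.le)
      calc ‖w‖ * (2 + |lam|) * (Complex.normSq a + Complex.normSq b)
          = (‖w‖ * K) * (δ * (Complex.normSq a + Complex.normSq b)) / 2 := by
            rw [show ‖w‖ * K * (δ * (Complex.normSq a + Complex.normSq b))
              = ‖w‖ * (K * δ) * (Complex.normSq a + Complex.normSq b) by ring, hKδ]
            ring
        _ ≤ (‖w‖ * K) * (2 * Qf lam a b) / 2 := by gcongr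
        _ = K * ‖w‖ * Qf lam a b := by ring
    have habs := neg_abs_le ((Complex.normSq w - lam * w.re) * Complex.normSq b
      + 2 * (w * b * starRingEnd ℂ a).re)
    have hgoal : (1 - K * ‖w‖) * Qf lam a b
        ≤ Qf lam a b + ((Complex.normSq w - lam * w.re) * Complex.normSq b
            + 2 * (w * b * starRingEnd ℂ a).re) := by nlinarith
    exact hgoal
  -- partial tail sums are at most 1/2
  have hsumc : ∀ k : ℕ, ∑ i ∈ Finset.range k, c i ≤ 1 / 2 := by
    intro k
    have heqsum : ∑ i ∈ Finset.range k, ‖v (N + i + 1)‖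
        = ∑ m ∈ (Finset.range k).image (fun i : ℕ => (N + i + 1 : ℤ)), ‖v m‖ := by
      rw [Finset.sum_image (by intro x hx y hy h; simp only at h; omega)]
    have hT := htail ((Finset.range k).image (fun i : ℕ => (N + i + 1 : ℤ)))
      (hdisj _ (by
        intro m hm
        simp only [Finset.mem_image] at hm
        obtain ⟨i, _, rfl⟩ := hm
        omega))
    have h1 : ∑ i ∈ Finset.range k, c i
        = K * ∑ i ∈ Finset.range k, ‖v (N + i + 1)‖ := by
      rw [Finset.mul_sum]
    rw [h1, heqsum]
    calc K * ∑ m ∈ (Finset.range k).image (fun i : ℕ => (N + i + 1 : ℤ)), ‖v m‖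
        ≤ K * (1 / (2 * K)) := mul_le_mul_of_nonneg_left hT hK0.le
      _ = 1 / 2 := by field_simp
  -- positivity of q 0
  have hq0pos : 0 < q 0 := by
    have := Qf_pos lam hlamabs (F N) (F (N + 1)) (hpair N)
    simpa [hqdef] using this
  -- lower bound for all k
  have hlb : ∀ k, q 0 / 2 ≤ q k := by
    intro k
    have h := prod_lower q c hq0 hc0 hc1 hrec k
    have h2 : q 0 / 2 ≤ (1 - ∑ i ∈ Finset.range k, c i) * q 0 := by
      have := hsumc k
      nlinarith
    linarith
  -- q tends to zero, contradiction
  have hψsum : Summable fun n : ℤ => ‖F n‖ ^ (2 : ℝ) := by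
    have := (lp.memℓp ψ).summable (p := 2) (by norm_num)
    simpa using this
  have hnorm0 : Tendsto (fun n : ℤ => ‖F n‖) cofinite (𝓝 0) := by
    have h := hψsum.tendsto_cofinite_zero
    have h2 := (Real.continuous_sqrt.tendsto 0).comp h
    simp only [Real.sqrt_zero] at h2
    convert h2 using 2 with n
    rw [Function.comp_apply, show ((2:ℝ)) = ((2:ℕ):ℝ) by norm_num, Real.rpow_natCast,
      Real.sqrt_sq (norm_nonneg _)]
  have hFt : Tendsto F atTop (𝓝 0) := by
    rw [tendsto_zero_iff_norm_tendsto_zero]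
    exact hnorm0.mono_left (by rw [Int.cofinite_eq]; exact le_sup_right)
  have hF1t : Tendsto (fun n : ℤ => F (n + 1)) atTop (𝓝 0) :=
    hFt.comp (tendsto_atTop_add_const_right atTop 1 tendsto_id)
  have hQcont : Continuous fun p : ℂ × ℂ => Qf lam p.1 p.2 := by
    unfold Qf
    exact ((Complex.continuous_normSq.comp continuous_fst).add
      (Complex.continuous_normSq.comp continuous_snd)).sub
      (continuous_const.mul (Complex.continuous_re.comp
        ((Complex.continuous_conj.comp continuous_fst).mul continuous_snd)))
  have hQt : Tendsto (fun n : ℤ => Qf lam (F n) (F (n + 1))) atTop (𝓝 0) := by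
    have h := (hQcont.tendsto ((0 : ℂ), (0 : ℂ))).comp (hFt.prodMk_nhds hF1t)
    simpa [Qf, Function.comp_def] using h
  have hcast : Tendsto (fun k : ℕ => (N + (k : ℤ) : ℤ)) atTop atTop :=
    tendsto_atTop_add_const_left atTop N tendsto_natCast_atTop_atTop
  have hqt : Tendsto q atTop (𝓝 0) := hQt.comp hcast
  have hlt : ∀ᶠ k in atTop, q k < q 0 / 2 :=
    hqt.eventually_lt_const (by positivity)
  obtain ⟨k, hk⟩ := hlt.exists
  exact absurd (hlb k) (not_le.2 hk)
end
end

section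
/- (Optimality for $\ell^1$) Let $Q > 0$ and let $\lambda \in \mathbb{C}\setminus(-2,2)$ satisfy $|\lambda^2 - 4| = Q^2$ and $\lambda \notin [-2,2]$. Then there exists $k \in \mathbb{C}$ with $0 < |k| < 1$ such that $\lambda = k + k^{-1}$ and $|k - k^{-1}| = Q$, and with $\omega := k^{-1} - k$ and the delta potential $\upsilon_n = \omega\delta_{n,0}$, one has $\|\upsilon\|_{\ell^1(\mathbb{Z})} = Q$ and $\lambda$ is an eigenvalue of $H_V = H_0 + V$. -/
noncomputable section

/-- optimality for `ℓ¹`: let `Q > 0` and `λ ∈ ℂ \ (-2,2)` with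
`|λ² - 4| = Q²` and `λ ∉ [-2,2]`. Then there is `k` with `0 < |k| < 1`,
`λ = k + k⁻¹`, `|k - k⁻¹| = Q`, and for the delta potential `v_n = ω δ_{n,0}` with
`ω := k⁻¹ - k` one has `‖v‖_{ℓ¹} = Q` and `λ` is an eigenvalue of `H_V = H₀ + V`. -/
theorem stmt19 (Q : ℝ) (hQ : 0 < Q) (lam : ℂ)
    (h1 : ∀ x ∈ Set.Ioo (-2 : ℝ) 2, (x : ℂ) ≠ lam)
    (h2 : ‖lam ^ 2 - 4‖ = Q ^ 2)
    (h3 : ∀ x ∈ Set.Icc (-2 : ℝ) 2, (x : ℂ) ≠ lam) :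
    ∃ k : ℂ, 0 < ‖k‖ ∧ ‖k‖ < 1 ∧ lam = k + k⁻¹ ∧
      ‖k - k⁻¹‖ = Q ∧
      (∑' n : ℤ, ‖(if n = 0 then k⁻¹ - k else 0 : ℂ)‖) = Q ∧
      ∀ HV : l2Z →L[ℂ] l2Z,
        (∀ (ψ : l2Z) (n : ℤ),
          (HV ψ) n = ψ (n - 1) + ψ (n + 1) + (if n = 0 then k⁻¹ - k else 0) * ψ n) →
        ∃ ψ : l2Z, ψ ≠ 0 ∧ HV ψ = lam • ψ := by
  -- Step 1: find k with 0 < |k| < 1 and lam = k + k⁻¹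
  obtain ⟨k, hk0, hk1, hkl⟩ :
      ∃ k : ℂ, k ≠ 0 ∧ ‖k‖ < 1 ∧ lam = k + k⁻¹ := by
    obtain ⟨d, hd⟩ := IsAlgClosed.exists_pow_nat_eq (k := ℂ) (lam ^ 2 - 4) two_pos
    set a : ℂ := (lam + d) / 2 with ha
    set b : ℂ := (lam - d) / 2 with hb
    have hab : a * b = 1 := by
      rw [ha, hb]
      field_simp
      linear_combination -hd
    have hsum : a + b = lam := by rw [ha, hb]; ring
    have ha0 : a ≠ 0 := fun h => by simp [h] at hab
    have hb0 : b ≠ 0 := fun h => by simp [h] at hab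
    have hbinv : b = a⁻¹ := eq_inv_of_mul_eq_one_right (by rw [mul_comm]; exact mul_comm b a ▸ hab)
    have habs : ‖a‖ * ‖b‖ = 1 := by rw [← norm_mul, hab, norm_one]
    -- |a| ≠ 1
    have hne1 : ‖a‖ ≠ 1 := by
      intro h
      have hconj : (starRingEnd ℂ) a = a⁻¹ := by
        apply eq_inv_of_mul_eq_one_right
        rw [Complex.mul_conj, Complex.normSq_eq_norm_sq, h]
        norm_num
      have hlam : lam = ((2 * a.re : ℝ) : ℂ) := by
        rw [← hsum, hbinv, ← hconj, Complex.add_conj]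
      have hre : |a.re| ≤ 1 := h ▸ Complex.abs_re_le_norm a
      refine h3 (2 * a.re) ⟨by cases abs_le.mp hre; linarith, by cases abs_le.mp hre; linarith⟩ ?_
      exact hlam.symm
    rcases lt_or_gt_of_ne hne1 with hlt | hgt
    · exact ⟨a, ha0, hlt, by rw [← hsum, hbinv]⟩
    · refine ⟨b, hb0, ?_, ?_⟩
      · have hbpos : 0 < ‖a‖ := norm_pos_iff.mpr ha0
        nlinarith [habs]
      · have : b⁻¹ = a := by rw [hbinv, inv_inv]
        rw [← hsum, this, add_comm]
  have hkpos : 0 < ‖k‖ := by simpa [norm_pos_iff] using hk0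
  -- Step 2: |k - k⁻¹| = Q
  have hsq : (k - k⁻¹) ^ 2 = lam ^ 2 - 4 := by
    rw [hkl]; field_simp; ring
  have hQ' : ‖k - k⁻¹‖ = Q := by
    have h4 : ‖k - k⁻¹‖ ^ 2 = Q ^ 2 := by
      rw [← norm_pow, hsq, h2]
    nlinarith [norm_nonneg (k - k⁻¹)]
  have hQ'' : ‖k⁻¹ - k‖ = Q := by
    rw [show k⁻¹ - k = -(k - k⁻¹) by ring, norm_neg, hQ']
  refine ⟨k, hkpos, hk1, hkl, hQ', ?_, ?_⟩
  · rw [tsum_eq_single 0 (by intro b hb; simp [hb])]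
    rw [if_pos rfl]; exact hQ''
  · intro HV hHV
    -- the eigenvector ψ n = k ^ |n|
    set f : ℤ → ℂ := fun n => k ^ n.natAbs with hf
    have hmem : Memℓp f 2 := by
      apply memℓp_gen
      have h2t : ((2 : ENNReal).toReal) = ((2 : ℕ) : ℝ) := by simp
      have hr0 : (0:ℝ) ≤ ‖k‖ ^ 2 := by positivity
      have hr1 : ‖k‖ ^ 2 < 1 := by nlinarith
      have hgeo := summable_geometric_of_lt_one hr0 hr1
      have hsummable : Summable fun n : ℤ => (‖k‖ ^ 2) ^ n.natAbs := by
        apply Summable.of_nat_of_neg_add_one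
        · simpa using hgeo
        · apply Summable.congr (hgeo.mul_left (‖k‖ ^ 2))
          intro n
          have e : (-1 + -(n:ℤ)).natAbs = n + 1 := by omega
          rw [show (-((n:ℤ)+1)) = -1 + -(n:ℤ) by ring, e, pow_succ]
          ring
      apply Summable.congr hsummable
      intro n
      rw [h2t, Real.rpow_natCast]
      simp [hf, norm_pow, ← pow_mul, mul_comm]
    let ψ : l2Z := ⟨f, hmem⟩
    have hψcoe : ∀ n, ψ n = f n := fun n => rfl
    refine ⟨ψ, ?_, ?_⟩
    · intro h
      have h0 : f 0 = 0 := by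
        have := congrFun (congrArg (fun g : l2Z => (g : ∀ _ : ℤ, ℂ)) h) 0
        simpa [hψcoe] using this
      simp [hf] at h0
    · apply lp.ext
      funext n
      rw [hHV ψ n, lp.coeFn_smul, Pi.smul_apply]
      simp only [hψcoe, smul_eq_mul]
      rcases lt_trichotomy n 0 with hn | hn | hn
      · obtain ⟨m, rfl⟩ : ∃ m : ℕ, n = -((m : ℤ) + 1) := ⟨(-n - 1).toNat, by omega⟩
        have e1 : (-((m : ℤ) + 1) - 1).natAbs = m + 2 := by omega
        have e2 : (-((m : ℤ) + 1) + 1).natAbs = m := by omega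
        have e3 : (-((m : ℤ) + 1)).natAbs = m + 1 := by omega
        have e4 : ¬(-((m : ℤ) + 1) = 0) := by omega
        rw [hkl]
        simp only [hf, e1, e2, e3, if_neg e4]
        field_simp
        ring
      · subst hn
        rw [hkl]
        norm_num [hf]
      · obtain ⟨m, rfl⟩ : ∃ m : ℕ, n = (m : ℤ) + 1 := ⟨(n - 1).toNat, by omega⟩
        have e1 : ((m : ℤ) + 1 - 1).natAbs = m := by omega
        have e2 : ((m : ℤ) + 1 + 1).natAbs = m + 2 := by omega
        have e3 : ((m : ℤ) + 1).natAbs = m + 1 := by omega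
        have e4 : ¬((m : ℤ) + 1 = 0) := by omega
        rw [hkl]
        simp only [hf, e1, e2, e3, if_neg e4]
        field_simp
        ring
end
end
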